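/- Suppose m, m' : ℝ^d → ℝ and masks B, B' : ℝ^d → ℝ^d are coordinate projections onto subsets S, S' ⊆ {1,…,d} respectively, with m∘B = m'∘B' as functions on ℝ^d. If m is non-constant in every coordinate of S (as a function of the masked input) and m' is non-constant in every coordinate of S', then S = S'. -/
import Mathlib

lemma mask_subset {d : ℕ} (S S' : Finset (Fin d))
    (m m' : (Fin d → ℝ) → ℝ)
    (B B' : (Fin d → ℝ) → Fin d → ℝ)
    (hB' : ∀ (x : Fin d → ℝ) (i : Fin d), B' x i = if i ∈ S' then x i else 0)
    (heq : ∀ x, m (B x) = m' (B' x))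
    (hnc : ∀ i ∈ S, ∃ x y : Fin d → ℝ,
      (∀ j, j ≠ i → x j = y j) ∧ m (B x) ≠ m (B y)) :
    S ⊆ S' := by
  intro i hi
  by_contra hi'
  obtain ⟨x, y, hxy, hne⟩ := hnc i hi
  apply hne
  rw [heq, heq]
  congr 1
  funext j
  rw [hB', hB']
  by_cases hj : j ∈ S'
  · simp only [hj, if_true]
    exact hxy j (fun h => hi' (h ▸ hj))
  · simp [hj]

/-- Masking-uniqueness: if m∘B = m'∘B' where B, B' are coordinate projections
onto S, S' and the composites are non-constant in every coordinate of S and S'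
respectively, then S = S'. -/
theorem mask_uniqueness {d : ℕ} (S S' : Finset (Fin d))
    (m m' : (Fin d → ℝ) → ℝ)
    (B B' : (Fin d → ℝ) → Fin d → ℝ)
    (hB : ∀ (x : Fin d → ℝ) (i : Fin d), B x i = if i ∈ S then x i else 0)
    (hB' : ∀ (x : Fin d → ℝ) (i : Fin d), B' x i = if i ∈ S' then x i else 0)
    (heq : ∀ x, m (B x) = m' (B' x))
    (hnc : ∀ i ∈ S, ∃ x y : Fin d → ℝ,
      (∀ j, j ≠ i → x j = y j) ∧ m (B x) ≠ m (B y))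
    (hnc' : ∀ i ∈ S', ∃ x y : Fin d → ℝ,
      (∀ j, j ≠ i → x j = y j) ∧ m' (B' x) ≠ m' (B' y)) :
    S = S' := by
  exact le_antisymm
    (mask_subset S S' m m' B B' hB' heq hnc)
    (mask_subset S' S m' m B' B hB (fun x => (heq x).symm) hnc')
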